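/- Let φ : M → ℂ be a bounded continuous function on M = M^in ⊔ M^out that is eventually constant along fibers: there exists a compact K ⊇ M^in such that φ(m) = φ(m') whenever m, m' ∉ K and p(m) = p(m'). If moreover the induced function on N is continuous, then φ extends to a continuous function on the p-compactification X = M ⊔ N. -/
import Mathlib


open TopologicalSpace Set

def pcA {M N : Type*} (p : M → N) (Mout : Set M) (E : Set N) (K : Set M) : Set (M ⊕ N) :=
  Sum.inl '' (Mout ∩ p ⁻¹' E ∩ Kᶜ) ∪ Sum.inr '' E

def pcBase {M N : Type*} [TopologicalSpace M] [TopologicalSpace N]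
    (p : M → N) (Mout : Set M) : Set (Set (M ⊕ N)) :=
  {s | ∃ O : Set M, IsOpen O ∧ s = Sum.inl '' O} ∪
    {s | ∃ (E : Set N) (K : Set M), IsOpen E ∧ IsCompact K ∧ s = pcA p Mout E K}

/-- Let `φ : M → ℂ` be a bounded continuous function which is eventually constant along
the fibers of `p`: there is a compact `K ⊇ M^in` such that `φ(m) = φ(m')` whenever
`m, m' ∉ K` and `p(m) = p(m')`, the common asymptotic value along the fiber over `n` being
`φ̄(n)`. If `φ̄ : N → ℂ` is continuous, then the function equal to `φ` on `M` and to `φ̄`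
on `N` is continuous on the `p`-compactification `X = M ⊔ N`. -/
theorem stmt19 {M N : Type*} [TopologicalSpace M] [TopologicalSpace N]
    [T2Space M] [LocallyCompactSpace M] [SecondCountableTopology M]
    [T2Space N] [CompactSpace N] [SecondCountableTopology N]
    (Min : Set M) (hMin : IsCompact Min)
    (p : M → N) (hp : ContinuousOn p Minᶜ)
    (hsurj : ∀ n : N, ∃ m ∈ Minᶜ, p m = n)
    (hfib : ∀ n : N, ¬ IsCompact {m | m ∈ Minᶜ ∧ p m = n})
    (φ : M → ℂ) (hφc : Continuous φ) (hφb : ∃ Cb : ℝ, ∀ m, ‖φ m‖ ≤ Cb)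
    (K : Set M) (hK : IsCompact K) (hMinK : Min ⊆ K)
    (hconst : ∀ m m', m ∉ K → m' ∉ K → m ∈ Minᶜ → m' ∈ Minᶜ → p m = p m' → φ m = φ m')
    (φbar : N → ℂ) (hφbar : ∀ m, m ∈ Minᶜ → m ∉ K → φbar (p m) = φ m)
    (hφbarc : Continuous φbar) :
    @Continuous (M ⊕ N) ℂ (generateFrom (pcBase p Minᶜ)) _ (Sum.elim φ φbar) := by
  letI : TopologicalSpace (M ⊕ N) := generateFrom (pcBase p Minᶜ)
  rw [continuous_def]
  intro V hV
  rw [isOpen_iff_forall_mem_open]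
  rintro (m | n) hx
  · refine ⟨Sum.inl '' (φ ⁻¹' V), ?_, ?_, ⟨m, hx, rfl⟩⟩
    · rintro _ ⟨a, ha, rfl⟩; exact ha
    · exact isOpen_generateFrom_of_mem (Or.inl ⟨φ ⁻¹' V, hV.preimage hφc, rfl⟩)
  · refine ⟨pcA p Minᶜ (φbar ⁻¹' V) K, ?_, ?_, Or.inr ⟨n, hx, rfl⟩⟩
    · rintro _ (⟨a, ⟨⟨haMin, haE⟩, haK⟩, rfl⟩ | ⟨n', hn', rfl⟩)
      · simpa using (hφbar a haMin haK) ▸ haE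
      · exact hn'
    · exact isOpen_generateFrom_of_mem
        (Or.inr ⟨φbar ⁻¹' V, K, hV.preimage hφbarc, hK, rfl⟩)
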